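/- Let $Y_1,\dots,Y_M$ be i.i.d. random variables taking values in $[e^{-1}, e]$ (e.g., $Y_i = \exp(u^\top v_i)$ with $\|u\|\le 1, \|v_i\|\le 1$). Then $\left|\mathbb{E}\log\left(\frac{1}{M}\sum_{i=1}^M Y_i\right) - \log \mathbb{E} Y_1\right| \le \frac{e}{\sqrt{M}}$. -/

import Mathlib

open MeasureTheory ProbabilityTheory


lemma log_le_half_sub_inv {s : ℝ} (hs : 1 ≤ s) : Real.log s ≤ (s - s⁻¹) / 2 := by
  have hD : ∀ x : ℝ, x ≠ 0 →
      HasDerivAt (fun y : ℝ => (y - y⁻¹) / 2 - Real.log y) ((1 + (x ^ 2)⁻¹) / 2 - x⁻¹) x := by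
    intro x hx
    have h1 : HasDerivAt (fun y : ℝ => y - y⁻¹) (1 - -(x ^ 2)⁻¹) x :=
      (hasDerivAt_id x).sub (hasDerivAt_inv hx)
    have h2 := (h1.div_const 2).sub (Real.hasDerivAt_log hx)
    exact h2.congr_deriv (by ring)
  have key : MonotoneOn (fun y : ℝ => (y - y⁻¹) / 2 - Real.log y) (Set.Ici 1) := by
    apply monotoneOn_of_deriv_nonneg (convex_Ici 1)
    · intro x hx
      have hx0 : x ≠ 0 := by simp only [Set.mem_Ici] at hx; positivity
      exact (hD x hx0).continuousAt.continuousWithinAt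
    · intro x hx
      rw [interior_Ici] at hx
      have hx0 : x ≠ 0 := ne_of_gt (lt_trans one_pos (Set.mem_Ioi.1 hx))
      exact (hD x hx0).differentiableAt.differentiableWithinAt
    · intro x hx
      rw [interior_Ici] at hx
      have hx0 : (0:ℝ) < x := lt_trans one_pos (Set.mem_Ioi.1 hx)
      rw [(hD x hx0.ne').deriv]
      have : (1 + (x ^ 2)⁻¹) / 2 - x⁻¹ = (x - 1) ^ 2 / (2 * x ^ 2) := by
        field_simp; ring
      rw [this]; positivity
  have h := key (Set.mem_Ici.2 le_rfl) (Set.mem_Ici.2 hs) hs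
  simp only [Real.log_one, inv_one, sub_self, zero_div, sub_zero] at h
  linarith

lemma sub_sq_le_log {t : ℝ} (ht : 1 ≤ t) : (t - 1) - (t - 1) ^ 2 / 2 ≤ Real.log t := by
  have hD : ∀ x : ℝ, x ≠ 0 →
      HasDerivAt (fun y : ℝ => Real.log y - (y - 1) + (y - 1) ^ 2 / 2)
        (x⁻¹ - 1 + (x - 1)) x := by
    intro x hx
    have h1 : HasDerivAt (fun y : ℝ => y - 1) 1 x := (hasDerivAt_id x).sub_const 1
    have h2 := ((Real.hasDerivAt_log hx).sub h1).add ((h1.pow 2).div_const 2)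
    exact h2.congr_deriv (by ring)
  have key : MonotoneOn (fun y : ℝ => Real.log y - (y - 1) + (y - 1) ^ 2 / 2) (Set.Ici 1) := by
    apply monotoneOn_of_deriv_nonneg (convex_Ici 1)
    · intro x hx
      have hx0 : x ≠ 0 := by simp only [Set.mem_Ici] at hx; positivity
      exact (hD x hx0).continuousAt.continuousWithinAt
    · intro x hx
      rw [interior_Ici] at hx
      have hx0 : x ≠ 0 := ne_of_gt (lt_trans one_pos (Set.mem_Ioi.1 hx))
      exact (hD x hx0).differentiableAt.differentiableWithinAt
    · intro x hx
      rw [interior_Ici] at hx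
      have hx0 : (0:ℝ) < x := lt_trans one_pos (Set.mem_Ioi.1 hx)
      rw [(hD x hx0.ne').deriv]
      have : x⁻¹ - 1 + (x - 1) = (x - 1) ^ 2 / x := by field_simp; ring
      rw [this]; positivity
  have h := key (Set.mem_Ici.2 le_rfl) (Set.mem_Ici.2 ht) ht
  simp only [Real.log_one, sub_self, zero_pow, zero_div, add_zero, zero_add] at h
  nlinarith [h]

lemma log_sandwich {x b : ℝ} (hx : (Real.exp 1)⁻¹ ≤ x) (hb : (Real.exp 1)⁻¹ ≤ b) :
    (x - b) - Real.exp 1 * (x - b) ^ 2 / 2 ≤ b * (Real.log x - Real.log b) ∧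
      b * (Real.log x - Real.log b) ≤ x - b := by
  have he : (0:ℝ) < Real.exp 1 := Real.exp_pos 1
  have hx0 : (0:ℝ) < x := lt_of_lt_of_le (by positivity) hx
  have hb0 : (0:ℝ) < b := lt_of_lt_of_le (by positivity) hb
  have hex : 1 ≤ Real.exp 1 * x := by
    calc (1:ℝ) = Real.exp 1 * (Real.exp 1)⁻¹ := (mul_inv_cancel₀ he.ne').symm
    _ ≤ Real.exp 1 * x := by exact mul_le_mul_of_nonneg_left hx he.le
  have heb : 1 ≤ Real.exp 1 * b := by
    calc (1:ℝ) = Real.exp 1 * (Real.exp 1)⁻¹ := (mul_inv_cancel₀ he.ne').symm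
    _ ≤ Real.exp 1 * b := by exact mul_le_mul_of_nonneg_left hb he.le
  constructor
  · rcases le_total x b with hxb | hbx
    · -- x ≤ b : use log (b/x) ≤ (b/x - x/b)/2
      have h1 : Real.log (b / x) ≤ (b / x - (b / x)⁻¹) / 2 :=
        log_le_half_sub_inv ((one_le_div hx0).2 hxb)
      rw [Real.log_div hb0.ne' hx0.ne', inv_div] at h1
      have h2 : 2 * (x * b) * (Real.log b - Real.log x) ≤ b ^ 2 - x ^ 2 := by
        have := mul_le_mul_of_nonneg_left h1 (by positivity : (0:ℝ) ≤ 2 * (x * b))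
        have heq : 2 * (x * b) * ((b / x - x / b) / 2) = b ^ 2 - x ^ 2 := by
          field_simp
        linarith [heq ▸ this]
      nlinarith [sq_nonneg (x - b), mul_nonneg (mul_nonneg hx0.le (sq_nonneg (x - b))) he.le,
        mul_pos hx0 hb0]
    · -- b ≤ x : use (t-1) - (t-1)^2/2 ≤ log t with t = x/b
      have h1 : (x / b - 1) - (x / b - 1) ^ 2 / 2 ≤ Real.log (x / b) :=
        sub_sq_le_log ((one_le_div hb0).2 hbx)
      rw [Real.log_div hx0.ne' hb0.ne'] at h1
      have h2 : 2 * b * (x - b) - (x - b) ^ 2 ≤ 2 * b ^ 2 * (Real.log x - Real.log b) := by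
        have := mul_le_mul_of_nonneg_left h1 (by positivity : (0:ℝ) ≤ 2 * b ^ 2)
        have heq : 2 * b ^ 2 * ((x / b - 1) - (x / b - 1) ^ 2 / 2)
            = 2 * b * (x - b) - (x - b) ^ 2 := by field_simp
        linarith [heq ▸ this]
      nlinarith [sq_nonneg (x - b), mul_nonneg (sq_nonneg (x - b)) hb0.le]
  · have h1 : Real.log (x / b) ≤ x / b - 1 := Real.log_le_sub_one_of_pos (by positivity)
    rw [Real.log_div hx0.ne' hb0.ne'] at h1
    have := mul_le_mul_of_nonneg_left h1 hb0.le
    calc b * (Real.log x - Real.log b) ≤ b * (x / b - 1) := this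
    _ = x - b := by field_simp

set_option maxHeartbeats 1600000 in
/-- If `Y₁, …, Y_M` are i.i.d. random variables with values in `[e⁻¹, e]`, then
`|𝔼 log (M⁻¹ ∑ᵢ Yᵢ) - log 𝔼 Y₁| ≤ e / √M`. -/
theorem iid_log_mean_deviation
    {Ω : Type*} [MeasureSpace Ω] [IsProbabilityMeasure (ℙ : Measure Ω)]
    (M : ℕ) (hM : 0 < M) (Y : Fin M → Ω → ℝ)
    (hmeas : ∀ i, Measurable (Y i))
    (hbdd : ∀ i, ∀ ω, Y i ω ∈ Set.Icc (Real.exp 1)⁻¹ (Real.exp 1))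
    (hindep : iIndepFun Y ℙ)
    (hident : ∀ i, (ℙ : Measure Ω).map (Y i) = (ℙ : Measure Ω).map (Y ⟨0, hM⟩)) :
    |(∫ ω, Real.log ((M : ℝ)⁻¹ * ∑ i, Y i ω)) - Real.log (∫ ω, Y ⟨0, hM⟩ ω)|
      ≤ Real.exp 1 / Real.sqrt M := by
  classical
  have he : (0:ℝ) < Real.exp 1 := Real.exp_pos 1
  have hM0 : (0:ℝ) < M := Nat.cast_pos.2 hM
  have h1M : (1:ℝ) ≤ M := Nat.one_le_cast.2 hM
  set μ : ℝ := ∫ ω, Y ⟨0, hM⟩ ω with hμdef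
  set S : Ω → ℝ := fun ω => (M : ℝ)⁻¹ * ∑ i, Y i ω with hSdef
  have hSmeas : Measurable S :=
    measurable_const.mul (Finset.measurable_sum _ fun i _ => hmeas i)
  have hmem : ∀ i, MemLp (Y i) 2 ℙ := fun i =>
    memLp_of_bounded (ae_of_all _ (hbdd i)) (hmeas i).aestronglyMeasurable 2
  have hint : ∀ i, Integrable (Y i) ℙ := fun i => (hmem i).integrable one_le_two
  -- equal means
  have hmean : ∀ i, ∫ ω, Y i ω = μ := by
    intro i
    have h1 : ∫ ω, Y i ω = ∫ x, x ∂((ℙ : Measure Ω).map (Y i)) :=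
      (integral_map (hmeas i).aemeasurable aestronglyMeasurable_id).symm
    have h2 : ∫ x, x ∂((ℙ : Measure Ω).map (Y ⟨0, hM⟩)) = ∫ ω, Y ⟨0, hM⟩ ω :=
      integral_map (hmeas ⟨0, hM⟩).aemeasurable aestronglyMeasurable_id
    rw [h1, hident i, h2]
  -- bounds on μ
  have hμ_mem : μ ∈ Set.Icc (Real.exp 1)⁻¹ (Real.exp 1) := by
    constructor
    · have h := integral_mono (integrable_const ((Real.exp 1)⁻¹)) (hint ⟨0, hM⟩)
        (fun ω => (hbdd ⟨0, hM⟩ ω).1)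
      simpa using h
    · have h := integral_mono (hint ⟨0, hM⟩) (integrable_const (Real.exp 1))
        (fun ω => (hbdd ⟨0, hM⟩ ω).2)
      simpa using h
  have hμ0 : (0:ℝ) < μ := lt_of_lt_of_le (by positivity) hμ_mem.1
  -- bounds on S
  have hS_mem : ∀ ω, S ω ∈ Set.Icc (Real.exp 1)⁻¹ (Real.exp 1) := by
    intro ω
    have hsum_lo : (M:ℝ) * (Real.exp 1)⁻¹ ≤ ∑ i, Y i ω := by
      calc (M:ℝ) * (Real.exp 1)⁻¹ = ∑ _i : Fin M, (Real.exp 1)⁻¹ := by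
            simp [Finset.sum_const, mul_comm]
      _ ≤ ∑ i, Y i ω := Finset.sum_le_sum fun i _ => (hbdd i ω).1
    have hsum_hi : ∑ i, Y i ω ≤ (M:ℝ) * Real.exp 1 := by
      calc ∑ i, Y i ω ≤ ∑ _i : Fin M, Real.exp 1 := Finset.sum_le_sum fun i _ => (hbdd i ω).2
      _ = (M:ℝ) * Real.exp 1 := by simp [Finset.sum_const, mul_comm]
    constructor
    · have h := mul_le_mul_of_nonneg_left hsum_lo (inv_nonneg.2 hM0.le)
      calc (Real.exp 1)⁻¹ = (M:ℝ)⁻¹ * ((M:ℝ) * (Real.exp 1)⁻¹) := by field_simp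
      _ ≤ S ω := h
    · have h := mul_le_mul_of_nonneg_left hsum_hi (inv_nonneg.2 hM0.le)
      calc S ω ≤ (M:ℝ)⁻¹ * ((M:ℝ) * Real.exp 1) := h
      _ = Real.exp 1 := by field_simp
  -- integrability
  have hSmem2 : MemLp S 2 ℙ :=
    memLp_of_bounded (ae_of_all _ hS_mem) hSmeas.aestronglyMeasurable 2
  have hSint : Integrable S ℙ := hSmem2.integrable one_le_two
  have hlog_mem : ∀ ω, Real.log (S ω) ∈ Set.Icc (-1 : ℝ) 1 := by
    intro ω
    have hS0 : (0:ℝ) < S ω := lt_of_lt_of_le (by positivity) (hS_mem ω).1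
    constructor
    · have := Real.log_le_log (by positivity) (hS_mem ω).1
      rwa [Real.log_inv, Real.log_exp] at this
    · have := Real.log_le_log hS0 (hS_mem ω).2
      rwa [Real.log_exp] at this
  have hlogint : Integrable (fun ω => Real.log (S ω)) ℙ :=
    (memLp_of_bounded (ae_of_all _ hlog_mem)
      (Real.measurable_log.comp hSmeas).aestronglyMeasurable 1).integrable le_rfl
  have hsq_mem : ∀ ω, (S ω - μ) ^ 2 ∈ Set.Icc (0 : ℝ) (Real.exp 1 ^ 2) := by
    intro ω
    refine ⟨sq_nonneg _, ?_⟩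
    have h1 := (hS_mem ω).1; have h2 := (hS_mem ω).2
    have h3 := hμ_mem.1; have h4 := hμ_mem.2
    have hei : (0:ℝ) < (Real.exp 1)⁻¹ := by positivity
    nlinarith [sq_nonneg (S ω - μ)]
  have hsqint : Integrable (fun ω => (S ω - μ) ^ 2) ℙ :=
    (memLp_of_bounded (ae_of_all _ hsq_mem)
      ((hSmeas.sub measurable_const).pow_const 2).aestronglyMeasurable 1).integrable le_rfl
  -- mean of S
  have hSint_eq : ∫ ω, S ω = μ := by
    rw [hSdef]
    simp only
    rw [integral_const_mul, integral_finset_sum _ (fun i _ => hint i)]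
    simp only [hmean, Finset.sum_const, Finset.card_univ, Fintype.card_fin, nsmul_eq_mul]
    field_simp
  -- the sandwich, integrated
  set I : ℝ := ∫ ω, Real.log (S ω) with hIdef
  set V : ℝ := ∫ ω, (S ω - μ) ^ 2 with hVdef
  have hintμlog : Integrable (fun ω => μ * (Real.log (S ω) - Real.log μ)) ℙ :=
    ((hlogint.sub (integrable_const _)).const_mul μ)
  have hmidint : ∫ ω, μ * (Real.log (S ω) - Real.log μ) = μ * (I - Real.log μ) := by
    rw [integral_const_mul, integral_sub hlogint (integrable_const _)]
    simp [hIdef]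
  have hup : μ * (I - Real.log μ) ≤ 0 := by
    have h1 : ∫ ω, μ * (Real.log (S ω) - Real.log μ) ≤ ∫ ω, (S ω - μ) :=
      integral_mono hintμlog (hSint.sub (integrable_const _))
        (fun ω => (log_sandwich (hS_mem ω).1 hμ_mem.1).2)
    rw [hmidint, integral_sub hSint (integrable_const _)] at h1
    simpa [hSint_eq] using h1
  have hlow : -(Real.exp 1 * V / 2) ≤ μ * (I - Real.log μ) := by
    have h2 : Integrable (fun ω => S ω - μ) ℙ := hSint.sub (integrable_const μ)
    have h3 : Integrable (fun ω => Real.exp 1 * (S ω - μ) ^ 2 / 2) ℙ :=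
      (hsqint.const_mul _).div_const 2
    have h1 : ∫ ω, ((S ω - μ) - Real.exp 1 * (S ω - μ) ^ 2 / 2)
        ≤ ∫ ω, μ * (Real.log (S ω) - Real.log μ) :=
      integral_mono (h2.sub h3) hintμlog (fun ω => (log_sandwich (hS_mem ω).1 hμ_mem.1).1)
    have e1 : ∫ ω, (S ω - μ) = 0 := by
      rw [integral_sub hSint (integrable_const μ), hSint_eq]; simp
    have e2 : ∫ ω, Real.exp 1 * (S ω - μ) ^ 2 / 2 = Real.exp 1 * V / 2 := by
      rw [integral_div, integral_const_mul]
    have hl : ∫ ω, ((S ω - μ) - Real.exp 1 * (S ω - μ) ^ 2 / 2) = -(Real.exp 1 * V / 2) := by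
      rw [integral_sub h2 h3, e1, e2]; ring
    rw [hmidint, hl] at h1
    exact h1
  -- variance computation
  have hVnonneg : 0 ≤ V := integral_nonneg fun ω => sq_nonneg _
  have hvarS : V = variance S ℙ := by
    rw [variance_eq_integral hSmem2.aemeasurable, hVdef]
    congr 1
    funext ω
    simp [hSint_eq]
  have hvar_eq : ∀ i, variance (Y i) ℙ = variance (Y ⟨0, hM⟩) ℙ := by
    intro i
    have hsq : ∀ j : Fin M, (ℙ : Measure Ω)[(Y j) ^ 2]
        = ∫ x, x ^ 2 ∂((ℙ : Measure Ω).map (Y j)) := by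
      intro j
      have := integral_map (μ := (ℙ : Measure Ω)) (φ := Y j) (hmeas j).aemeasurable
        (f := fun x : ℝ => x ^ 2) (by fun_prop)
      rw [this]
      rfl
    rw [variance_eq_sub (hmem i), variance_eq_sub (hmem ⟨0, hM⟩), hsq i, hsq ⟨0, hM⟩, hident i]
    have hmm : (ℙ : Measure Ω)[Y i] = (ℙ : Measure Ω)[Y ⟨0, hM⟩] := by
      show (∫ ω, Y i ω) = ∫ ω, Y ⟨0, hM⟩ ω
      rw [hmean i, hμdef]
    rw [hmm]
  have hvarsum : variance S ℙ = variance (Y ⟨0, hM⟩) ℙ / M := by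
    have hfun : S = fun ω => (M:ℝ)⁻¹ * (∑ i, Y i) ω := by
      funext ω; simp [hSdef, Finset.sum_apply]
    rw [hfun, variance_const_mul, IndepFun.variance_sum (fun i _ => hmem i)
      (fun i _ j _ hij => hindep.indepFun hij)]
    simp only [hvar_eq, Finset.sum_const, Finset.card_univ, Fintype.card_fin, nsmul_eq_mul]
    field_simp
  have hBD : variance (Y ⟨0, hM⟩) ℙ ≤ (Real.exp 1 - μ) * (μ - (Real.exp 1)⁻¹) :=
    variance_le_sub_mul_sub (ae_of_all _ (hbdd ⟨0, hM⟩)) (hmeas ⟨0, hM⟩).aemeasurable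
  -- numeric bound
  have he4 : Real.exp 1 + (Real.exp 1)⁻¹ ≤ 4 := by
    have h1 : Real.exp 1 < 2.7182818286 := Real.exp_one_lt_d9
    have h2 : (Real.exp 1)⁻¹ ≤ 1 := by
      rw [inv_le_one_iff₀]; right; linarith [Real.exp_one_gt_d9]
    linarith
  have hBD2 : (Real.exp 1 - μ) * (μ - (Real.exp 1)⁻¹) ≤ 2 * μ := by
    have hee : Real.exp 1 * (Real.exp 1)⁻¹ = 1 := mul_inv_cancel₀ he.ne'
    nlinarith [sq_nonneg (μ - 1), mul_nonneg (sub_nonneg.2 he4) hμ0.le, hee]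
  have hVle : V ≤ 2 * μ / M := by
    rw [hvarS, hvarsum]
    exact (div_le_div_iff_of_pos_right hM0).2 (hBD.trans hBD2)
  -- conclude
  have hsqrt0 : (0:ℝ) < Real.sqrt M := Real.sqrt_pos.2 hM0
  have hsqrt1 : (1:ℝ) ≤ Real.sqrt M := Real.one_le_sqrt.mpr h1M
  have hsqrtM : Real.sqrt M ≤ M := by
    nlinarith [Real.sq_sqrt hM0.le, hsqrt1]
  have hIL : I ≤ Real.log μ := by nlinarith [hup, hμ0]
  have hLI : Real.log μ - I ≤ Real.exp 1 / M := by
    have h1 : μ * (Real.log μ - I) ≤ Real.exp 1 * V / 2 := by nlinarith [hlow]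
    have h2 : Real.exp 1 * V / 2 ≤ Real.exp 1 * (2 * μ / M) / 2 := by
      have := mul_le_mul_of_nonneg_left hVle he.le
      linarith
    have h3 : Real.exp 1 * (2 * μ / M) / 2 = μ * (Real.exp 1 / M) := by
      field_simp
    have h4 : μ * (Real.log μ - I) ≤ μ * (Real.exp 1 / M) := by
      rw [← h3]; linarith
    exact le_of_mul_le_mul_left h4 hμ0
  have heM : Real.exp 1 / (M:ℝ) ≤ Real.exp 1 / Real.sqrt M :=
    div_le_div_of_nonneg_left he.le hsqrt0 hsqrtM
  clear_value S I V μ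
  have hfinal : |I - Real.log μ| ≤ Real.exp 1 / Real.sqrt M := by
    rw [abs_le]
    constructor
    · have h5 : Real.log μ - I ≤ Real.exp 1 / Real.sqrt M := le_trans hLI heM
      linarith
    · have h6 : (0:ℝ) ≤ Real.exp 1 / Real.sqrt M := by positivity
      linarith [hIL]
  exact hfinal
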